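/- arXiv:1407.8303 — 3 statements merged into one kernel-verified Lean document; each statement's English description precedes it below -/
import Mathlib

section
/- Let s > 0, and let k ∈ ℕ be the integer with s ∈ [k−1, k). Let α > −1, β ∈ ℝ, and n ∈ ℕ. Then for every x ∈ (−1, 1), D_+^s[ (1−·)^{α+s} P_n^{(α+s, β−s)} ](x) = [Γ(n+α+s+1)/Γ(n+α+1)] · (1−x)^{α} · P_n^{(α,β)}(x). -/
open MeasureTheory Filter Finset

/-- Jacobi polynomial with real parameters. -/
noncomputable def jacobiP (a b : ℝ) (n : ℕ) (x : ℝ) : ℝ :=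
  ∑ j ∈ Finset.range (n + 1),
    ((ascPochhammer ℝ j).eval ((n : ℝ) + a + b + 1) / (Nat.factorial j : ℝ)) *
      ((ascPochhammer ℝ (n - j)).eval (a + (j : ℝ) + 1) / (Nat.factorial (n - j) : ℝ)) *
      ((x - 1) / 2) ^ j

/-- Right Riemann-Liouville fractional integral on (-1,1). -/
noncomputable def Iplus (ρ : ℝ) (v : ℝ → ℝ) (x : ℝ) : ℝ :=
  (1 / Real.Gamma ρ) * ∫ y in x..1, (y - x) ^ (ρ - 1) * v y

/-- Left Riemann-Liouville fractional integral on (-1,1). -/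
noncomputable def Iminus (ρ : ℝ) (v : ℝ → ℝ) (x : ℝ) : ℝ :=
  (1 / Real.Gamma ρ) * ∫ y in (-1 : ℝ)..x, (x - y) ^ (ρ - 1) * v y

/-- Right Riemann-Liouville fractional derivative of order `s ∈ [k-1,k)`. -/
noncomputable def Dplus (s : ℝ) (k : ℕ) (v : ℝ → ℝ) (x : ℝ) : ℝ :=
  (-1 : ℝ) ^ k * iteratedDeriv k (Iplus ((k : ℝ) - s) v) x

/-- Left Riemann-Liouville fractional derivative of order `s ∈ [k-1,k)`. -/
noncomputable def Dminus (s : ℝ) (k : ℕ) (v : ℝ → ℝ) (x : ℝ) : ℝ :=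
  iteratedDeriv k (Iminus ((k : ℝ) - s) v) x

/- ### Auxiliary lemmas -/

lemma real_beta {a b : ℝ} (ha : 0 < a) (hb : 0 < b) :
    ∫ t in (0:ℝ)..1, t ^ (a-1) * (1-t) ^ (b-1) =
      Real.Gamma a * Real.Gamma b / Real.Gamma (a+b) := by
  have hab : Real.Gamma (a + b) ≠ 0 := (Real.Gamma_pos_of_pos (by linarith)).ne'
  have h := Complex.Gamma_mul_Gamma_eq_betaIntegral (s := (a:ℂ)) (t := (b:ℂ))
    (by simpa using ha) (by simpa using hb)
  have hbeta : Complex.betaIntegral a b =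
      ((∫ t in (0:ℝ)..1, t ^ (a-1) * (1-t) ^ (b-1) : ℝ) : ℂ) := by
    rw [Complex.betaIntegral, ← intervalIntegral.integral_ofReal]
    apply intervalIntegral.integral_congr
    intro t ht
    rw [Set.uIcc_of_le (by norm_num : (0:ℝ) ≤ 1)] at ht
    have h1 : (0:ℝ) ≤ t := ht.1
    have h2 : (0:ℝ) ≤ 1 - t := by linarith [ht.2]
    push_cast
    rw [Complex.ofReal_cpow h1, Complex.ofReal_cpow h2]
    push_cast
    ring
  rw [hbeta, ← Complex.ofReal_add, Complex.Gamma_ofReal, Complex.Gamma_ofReal,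
    Complex.Gamma_ofReal] at h
  have h' : Real.Gamma a * Real.Gamma b =
      Real.Gamma (a+b) * ∫ t in (0:ℝ)..1, t ^ (a-1) * (1-t) ^ (b-1) := by exact_mod_cast h
  field_simp
  linarith [h']

lemma integrable_kernel {x μ ρ : ℝ} (hx : x < 1) (hμ : -1 < μ) (hρ : 0 < ρ) :
    IntervalIntegrable (fun y => (y - x) ^ (ρ-1) * (1-y) ^ μ) volume x 1 := by
  set m := (x + 1) / 2 with hm
  have hxm : x < m := by simp [hm]; linarith
  have hm1 : m < 1 := by simp [hm]; linarith
  apply IntervalIntegrable.trans (b := m)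
  · have h1 : IntervalIntegrable (fun y => (y - x) ^ (ρ-1)) volume x m := by
      have := (intervalIntegral.intervalIntegrable_rpow' (a := 0) (b := m - x)
        (by linarith : (-1:ℝ) < ρ - 1)).comp_sub_right x
      simpa using this
    have h2 : ContinuousOn (fun y => (1-y) ^ μ) (Set.uIcc x m) := by
      apply ContinuousOn.rpow_const
      · exact (continuous_const.sub continuous_id).continuousOn
      · intro y hy
        rw [Set.uIcc_of_le hxm.le] at hy
        left; have := hy.2; simp only [ne_eq, sub_eq_zero]; intro h; subst h; linarith
    exact h1.mul_continuousOn h2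
  · have h1 : IntervalIntegrable (fun y => (1 - y) ^ μ) volume m 1 := by
      have := (intervalIntegral.intervalIntegrable_rpow' (a := 1 - m) (b := 0) hμ).comp_sub_left 1
      simpa using this
    have h2 : ContinuousOn (fun y => (y - x) ^ (ρ-1)) (Set.uIcc m 1) := by
      apply ContinuousOn.rpow_const
      · exact (continuous_id.sub continuous_const).continuousOn
      · intro y hy
        rw [Set.uIcc_of_le hm1.le] at hy
        left; have h1y := hy.1; simp only [ne_eq, sub_eq_zero]; intro h; subst h; linarith
    exact h1.continuousOn_mul h2

lemma beta_shift {x μ ρ : ℝ} (hx : x < 1) (hμ : -1 < μ) (hρ : 0 < ρ) :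
    ∫ y in x..1, (y - x) ^ (ρ-1) * (1-y) ^ μ =
      (1-x) ^ (ρ+μ) * (Real.Gamma ρ * Real.Gamma (μ+1) / Real.Gamma (ρ+μ+1)) := by
  have hc : (0:ℝ) < 1 - x := by linarith
  have key := intervalIntegral.integral_comp_mul_add
    (f := fun y => (y - x) ^ (ρ-1) * (1-y) ^ μ) (a := 0) (b := 1) (c := 1 - x) hc.ne' x
  simp only [mul_zero, zero_add, mul_one] at key
  have he : 1 - x + x = 1 := by ring
  rw [he] at key
  have hinner : ∀ t ∈ Set.uIcc (0:ℝ) 1,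
      ((1-x) * t + x - x) ^ (ρ-1) * (1 - ((1-x) * t + x)) ^ μ
        = (1-x) ^ (ρ-1) * (1-x) ^ μ * (t ^ (ρ-1) * (1-t) ^ ((μ+1)-1)) := by
    intro t ht
    rw [Set.uIcc_of_le (by norm_num : (0:ℝ) ≤ 1)] at ht
    have h1 : (1-x) * t + x - x = (1-x) * t := by ring
    have h2 : 1 - ((1-x) * t + x) = (1-x) * (1-t) := by ring
    rw [h1, h2, Real.mul_rpow hc.le ht.1, Real.mul_rpow hc.le (by linarith [ht.2])]
    ring_nf
  rw [intervalIntegral.integral_congr hinner] at key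
  rw [intervalIntegral.integral_const_mul, real_beta hρ (by linarith)] at key
  have : (∫ y in x..1, (y - x) ^ (ρ-1) * (1-y) ^ μ)
      = (1-x) * ((1-x) ^ (ρ-1) * (1-x) ^ μ *
        (Real.Gamma ρ * Real.Gamma (μ+1) / Real.Gamma (ρ+(μ+1)))) := by
    rw [smul_eq_mul, inv_mul_eq_div, eq_div_iff hc.ne'] at key
    linarith [key]
  rw [this]
  have hpow : (1-x) * ((1-x) ^ (ρ-1) * (1-x) ^ μ) = (1-x) ^ (ρ+μ) := by
    rw [show ρ+μ = 1 + (ρ-1) + μ by ring, Real.rpow_add hc, Real.rpow_add hc, Real.rpow_one]; ring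
  have harg : ρ + (μ + 1) = ρ + μ + 1 := by ring
  rw [harg, ← hpow]; ring

lemma poch_gamma (m : ℕ) : ∀ {x : ℝ}, 0 < x →
    (ascPochhammer ℝ m).eval x = Real.Gamma (x + m) / Real.Gamma x := by
  induction m with
  | zero => intro x hx; simp [Real.Gamma_pos_of_pos hx |>.ne']
  | succ m ih =>
    intro x hx
    rw [ascPochhammer_succ_right]
    simp only [Polynomial.eval_mul, Polynomial.eval_add, Polynomial.eval_X,
      Polynomial.eval_natCast]
    rw [ih hx]
    have hxm : (0:ℝ) < x + m := by positivity
    have : Real.Gamma (x + (m+1:ℕ)) = (x + m) * Real.Gamma (x + m) := by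
      rw [show (x + (m+1:ℕ) : ℝ) = (x + m) + 1 by push_cast; ring, Real.Gamma_add_one hxm.ne']
    rw [this]
    field_simp

lemma prod_desc (k : ℕ) : ∀ {θ : ℝ}, 0 < θ - k + 1 →
    ∏ i ∈ Finset.range k, (θ - i) = Real.Gamma (θ+1) / Real.Gamma (θ - k + 1) := by
  induction k with
  | zero => intro θ h; simp at h ⊢; rw [div_self (Real.Gamma_pos_of_pos (by linarith)).ne']
  | succ k ih =>
    intro θ h
    have hk : (0:ℝ) < θ - k := by push_cast at h; linarith
    rw [prod_range_succ, ih (by linarith)]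
    have : Real.Gamma (θ - k + 1) = (θ - k) * Real.Gamma (θ - k) := Real.Gamma_add_one hk.ne'
    rw [this, show (θ - (k+1:ℕ) + 1 : ℝ) = θ - k by push_cast; ring]
    have h1 : Real.Gamma (θ - k) ≠ 0 := (Real.Gamma_pos_of_pos hk).ne'
    field_simp

noncomputable def cJ (a b : ℝ) (n j : ℕ) : ℝ :=
  ((ascPochhammer ℝ j).eval ((n : ℝ) + a + b + 1) / (Nat.factorial j : ℝ)) *
    ((ascPochhammer ℝ (n - j)).eval (a + (j : ℝ) + 1) / (Nat.factorial (n - j) : ℝ)) *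
    (-(1:ℝ)/2) ^ j

lemma hv_expand (a b : ℝ) (n : ℕ) {y : ℝ} (hy : y < 1) :
    (1 - y) ^ a * jacobiP a b n y
      = ∑ j ∈ Finset.range (n + 1), cJ a b n j * (1 - y) ^ (a + (j:ℝ)) := by
  have hc : (0:ℝ) < 1 - y := by linarith
  rw [jacobiP, Finset.mul_sum]
  refine Finset.sum_congr rfl fun j _ => ?_
  rw [cJ]
  have h1 : ((y - 1) / 2) ^ j = (-(1:ℝ)/2) ^ j * (1 - y) ^ j := by
    rw [← mul_pow]; congr 1; ring
  rw [h1, Real.rpow_add hc, Real.rpow_natCast]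
  ring

lemma hIplus_eq {a ρ : ℝ} (ha : -1 < a) (hρ : 0 < ρ) (n : ℕ) (c : ℕ → ℝ) (v : ℝ → ℝ)
    (hv : ∀ y < (1:ℝ), v y = ∑ j ∈ Finset.range (n+1), c j * (1-y) ^ (a + (j:ℝ)))
    {x : ℝ} (hx : x < 1) :
    Iplus ρ v x = ∑ j ∈ Finset.range (n+1),
      c j * (Real.Gamma (a + j + 1) / Real.Gamma (ρ + a + j + 1)) * (1-x) ^ (ρ + a + j) := by
  have hΓρ : Real.Gamma ρ ≠ 0 := (Real.Gamma_pos_of_pos hρ).ne'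
  rw [Iplus]
  have hstep : ∫ y in x..1, (y - x) ^ (ρ - 1) * v y
      = ∫ y in x..1, ∑ j ∈ Finset.range (n+1),
          c j * ((y - x) ^ (ρ - 1) * (1-y) ^ (a + (j:ℝ))) := by
    apply intervalIntegral.integral_congr_ae
    have h1 : ∀ᵐ y : ℝ, y ≠ 1 := by
      refine MeasureTheory.ae_iff.mpr ?_
      have hset : {a : ℝ | ¬ a ≠ 1} = {1} := by ext y; simp
      rw [hset]
      exact Real.volume_singleton
    filter_upwards [h1] with y hy1 hmem
    have hyle : y ≤ 1 := by
      rcases Set.mem_uIoc.mp hmem with h | h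
      · exact h.2
      · exact le_trans h.2 hx.le
    have hylt : y < 1 := lt_of_le_of_ne hyle hy1
    rw [hv y hylt, Finset.mul_sum]
    refine Finset.sum_congr rfl fun j _ => ?_
    ring
  rw [hstep, intervalIntegral.integral_finset_sum]
  swap
  · intro j _
    exact (integrable_kernel hx (by linarith) hρ).const_mul _
  rw [Finset.mul_sum]
  refine Finset.sum_congr rfl fun j _ => ?_
  rw [intervalIntegral.integral_const_mul, beta_shift hx (by linarith) hρ]
  rw [show ρ + (a + (j:ℝ)) + 1 = ρ + a + j + 1 by ring, show ρ + (a + (j:ℝ)) = ρ + a + j by ring,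
    show a + (j:ℝ) + 1 = a + j + 1 by ring]
  have hcalc : (1 / Real.Gamma ρ) *
      (c j * ((1-x) ^ (ρ+a+j) * (Real.Gamma ρ * Real.Gamma (a+j+1) / Real.Gamma (ρ+a+j+1))))
      = (Real.Gamma ρ)⁻¹ * Real.Gamma ρ *
        (c j * (Real.Gamma (a+j+1) / Real.Gamma (ρ+a+j+1)) * (1-x) ^ (ρ+a+j)) := by
    ring
  rw [hcalc, inv_mul_cancel₀ hΓρ, one_mul]

lemma hIter (n : ℕ) (C e : ℕ → ℝ) (F : ℝ → ℝ)
    (hF : ∀ x < (1:ℝ), F x = ∑ j ∈ Finset.range (n+1), C j * (1-x) ^ (e j)) :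
    ∀ m : ℕ, ∀ x < (1:ℝ), iteratedDeriv m F x
      = ∑ j ∈ Finset.range (n+1),
          C j * ((-1:ℝ)^m * ∏ i ∈ Finset.range m, (e j - i)) * (1-x) ^ (e j - m) := by
  intro m
  induction m with
  | zero =>
    intro x hx
    rw [iteratedDeriv_zero, hF x hx]
    refine Finset.sum_congr rfl fun j _ => ?_
    norm_num
  | succ m ih =>
    intro x hx
    rw [iteratedDeriv_succ]
    have heq : deriv (iteratedDeriv m F) x = deriv (fun x => ∑ j ∈ Finset.range (n+1),
        C j * ((-1:ℝ)^m * ∏ i ∈ Finset.range m, (e j - i)) * (1-x) ^ (e j - m)) x :=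
      Filter.EventuallyEq.deriv_eq
        (Filter.eventuallyEq_of_mem (Iio_mem_nhds hx) (fun y hy => ih y hy))
    rw [heq]
    have hx0 : (0:ℝ) < 1 - x := by linarith
    have hder : HasDerivAt (fun x => ∑ j ∈ Finset.range (n+1),
        C j * ((-1:ℝ)^m * ∏ i ∈ Finset.range m, (e j - i)) * (1-x) ^ (e j - m))
        (∑ j ∈ Finset.range (n+1), C j * ((-1:ℝ)^m * ∏ i ∈ Finset.range m, (e j - i)) *
          ((e j - m) * (1-x) ^ (e j - m - 1) * (-1))) x := by
      apply HasDerivAt.fun_sum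
      intro j _
      have hinner : HasDerivAt (fun x : ℝ => 1 - x) (-1) x := by
        simpa using (hasDerivAt_id x).const_sub 1
      have houter := Real.hasDerivAt_rpow_const (x := 1 - x) (p := e j - m) (Or.inl hx0.ne')
      exact (houter.comp x hinner).const_mul _
    rw [hder.deriv]
    refine Finset.sum_congr rfl fun j _ => ?_
    rw [Finset.prod_range_succ, pow_succ,
      show e j - (m:ℝ) - 1 = e j - ((m+1:ℕ):ℝ) by push_cast; ring]
    push_cast
    ring

lemma sign_cancel (k : ℕ) (c p q : ℝ) : (-1:ℝ)^k * (c * ((-1:ℝ)^k * p) * q) = c * p * q := by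
  have hsq : ((-1:ℝ))^k * (-1:ℝ)^k = 1 := by rw [← mul_pow]; norm_num
  linear_combination (c * p * q) * hsq

/-- Lemma 2.6, right derivative formula. -/
theorem stmt4 (s : ℝ) (hs : 0 < s) (k : ℕ) (hk1 : (k : ℝ) - 1 ≤ s) (hk2 : s < k)
    (α β : ℝ) (hα : -1 < α) (n : ℕ) :
    ∀ x ∈ Set.Ioo (-1 : ℝ) 1,
      Dplus s k (fun y => (1 - y) ^ (α + s) * jacobiP (α + s) (β - s) n y) x =
        Real.Gamma ((n : ℝ) + α + s + 1) / Real.Gamma ((n : ℝ) + α + 1) *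
          ((1 - x) ^ α * jacobiP α β n x) := by
  intro x hx
  obtain ⟨hx1, hx2⟩ := hx
  have hx0 : (0:ℝ) < 1 - x := by linarith
  have hρ : (0:ℝ) < (k:ℝ) - s := by linarith
  have has : (-1:ℝ) < α + s := by linarith
  -- the expansion of v
  have hv : ∀ y < (1:ℝ), (fun y => (1 - y) ^ (α + s) * jacobiP (α + s) (β - s) n y) y
      = ∑ j ∈ Finset.range (n+1), cJ (α+s) (β-s) n j * (1-y) ^ ((α+s) + (j:ℝ)) :=
    fun y hy => hv_expand (α+s) (β-s) n hy
  -- the Iplus formula, valid on Iio 1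
  have hF : ∀ x' < (1:ℝ),
      Iplus ((k:ℝ) - s) (fun y => (1 - y) ^ (α + s) * jacobiP (α + s) (β - s) n y) x'
        = ∑ j ∈ Finset.range (n+1),
            (cJ (α+s) (β-s) n j *
              (Real.Gamma ((α+s) + j + 1) / Real.Gamma ((k:ℝ) - s + (α+s) + j + 1))) *
            (1-x') ^ ((k:ℝ) - s + (α+s) + j) := by
    intro x' hx'
    exact hIplus_eq has hρ n (fun j => cJ (α+s) (β-s) n j) _ hv hx'
  have hIT := hIter n
    (fun j => cJ (α+s) (β-s) n j *
      (Real.Gamma ((α+s) + j + 1) / Real.Gamma ((k:ℝ) - s + (α+s) + j + 1)))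
    (fun j => (k:ℝ) - s + (α+s) + j)
    (Iplus ((k:ℝ) - s) (fun y => (1 - y) ^ (α + s) * jacobiP (α + s) (β - s) n y))
    hF k x hx2
  rw [Dplus, hIT, Finset.mul_sum]
  have hRHS : Real.Gamma ((n:ℝ)+α+s+1) / Real.Gamma ((n:ℝ)+α+1) * ((1-x)^α * jacobiP α β n x)
      = ∑ j ∈ Finset.range (n+1), Real.Gamma ((n:ℝ)+α+s+1) / Real.Gamma ((n:ℝ)+α+1) *
          ((1-x)^α *
            (((ascPochhammer ℝ j).eval ((n : ℝ) + α + β + 1) / (Nat.factorial j : ℝ)) *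
              ((ascPochhammer ℝ (n - j)).eval (α + (j : ℝ) + 1) / (Nat.factorial (n - j) : ℝ)) *
              ((x - 1) / 2) ^ j)) := by
    rw [jacobiP, Finset.mul_sum, Finset.mul_sum]
  rw [hRHS]
  refine Finset.sum_congr rfl fun j hj => ?_
  have hjn : j ≤ n := Nat.lt_succ_iff.mp (Finset.mem_range.mp hj)
  have hcast : ((n - j : ℕ) : ℝ) = (n:ℝ) - j := by
    rw [Nat.cast_sub hjn]
  rw [sign_cancel]
  -- now unfold cJ and rewrite all Gamma expressions
  rw [cJ]
  have hjr : (0:ℝ) ≤ (j:ℝ) := Nat.cast_nonneg j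
  have hkr : (0:ℝ) ≤ (k:ℝ) := Nat.cast_nonneg k
  -- Pochhammer → Gamma
  rw [poch_gamma (n-j) (show (0:ℝ) < (α+s) + (j:ℝ) + 1 by linarith),
      poch_gamma (n-j) (show (0:ℝ) < α + (j:ℝ) + 1 by linarith)]
  rw [show (α+s) + (j:ℝ) + 1 + ((n-j:ℕ):ℝ) = (n:ℝ) + α + s + 1 by rw [hcast]; ring,
      show α + (j:ℝ) + 1 + ((n-j:ℕ):ℝ) = (n:ℝ) + α + 1 by rw [hcast]; ring]
  -- the descending product → Gamma
  rw [prod_desc k (show (0:ℝ) < ((k:ℝ) - s + (α+s) + (j:ℝ)) - (k:ℕ) + 1 by push_cast; linarith)]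
  rw [show ((k:ℝ) - s + (α+s) + (j:ℝ)) + 1 = α + (k:ℝ) + (j:ℝ) + 1 by ring,
      show ((k:ℝ) - s + (α+s) + (j:ℝ)) - ((k:ℕ):ℝ) + 1 = α + (j:ℝ) + 1 by push_cast; ring,
      show (k:ℝ) - s + (α+s) + (j:ℝ) - ((k:ℕ):ℝ) = α + (j:ℝ) by push_cast; ring,
      show (n:ℝ) + (α+s) + (β-s) + 1 = (n:ℝ) + α + β + 1 by ring]
  -- rewrite the RHS power
  rw [show ((x - 1) / 2) ^ j = (-(1:ℝ)/2) ^ j * (1 - x) ^ j by rw [← mul_pow]; congr 1; ring]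
  rw [show (1-x) ^ α * ((((ascPochhammer ℝ j).eval ((n : ℝ) + α + β + 1)) / (Nat.factorial j : ℝ)) *
        (Real.Gamma ((n:ℝ) + α + 1) / Real.Gamma (α + (j:ℝ) + 1) / (Nat.factorial (n - j) : ℝ)) *
        ((-(1:ℝ)/2) ^ j * (1 - x) ^ j))
      = ((((ascPochhammer ℝ j).eval ((n : ℝ) + α + β + 1)) / (Nat.factorial j : ℝ)) *
        (Real.Gamma ((n:ℝ) + α + 1) / Real.Gamma (α + (j:ℝ) + 1) / (Nat.factorial (n - j) : ℝ)) *
        (-(1:ℝ)/2) ^ j) * ((1-x) ^ α * (1-x) ^ j) by ring]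
  rw [← Real.rpow_natCast (1-x) j, ← Real.rpow_add hx0]
  -- now pure Gamma algebra
  have hG1 : Real.Gamma (α + s + (j:ℝ) + 1) ≠ 0 :=
    (Real.Gamma_pos_of_pos (by linarith)).ne'
  have hG2 : Real.Gamma (α + (k:ℝ) + (j:ℝ) + 1) ≠ 0 :=
    (Real.Gamma_pos_of_pos (by linarith)).ne'
  have hG3 : Real.Gamma (α + (j:ℝ) + 1) ≠ 0 :=
    (Real.Gamma_pos_of_pos (by linarith)).ne'
  have hnr : (0:ℝ) ≤ (n:ℝ) := Nat.cast_nonneg n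
  have hG5 : Real.Gamma ((n:ℝ) + α + 1) ≠ 0 :=
    (Real.Gamma_pos_of_pos (by linarith)).ne'
  have hf1 : (Nat.factorial j : ℝ) ≠ 0 := Nat.cast_ne_zero.mpr (Nat.factorial_ne_zero j)
  have hf2 : (Nat.factorial (n-j) : ℝ) ≠ 0 := Nat.cast_ne_zero.mpr (Nat.factorial_ne_zero (n-j))
  rw [show (α+s) + (j:ℝ) + 1 = α + s + (j:ℝ) + 1 by ring]
  field_simp
end

section
/- Let s > 0, and let k ∈ ℕ be the integer with s ∈ [k−1, k). Let α > s−1, β ∈ ℝ, and n ∈ ℕ. Then for every x ∈ (−1, 1), D_+^s[ (1−·)^α P_n^{(α,β)} ](x) = [Γ(n+α+1)/Γ(n+α−s+1)] · (1−x)^{α−s} · P_n^{(α−s, β+s)}(x). Equivalently, in terms of the generalized Jacobi functions, D_+^s[^+J_n^{(−α,β)}] = [Γ(n+α+1)/Γ(n+α−s+1)] · ^+J_n^{(−α+s, β+s)} on (−1,1). -/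
open MeasureTheory Filter Finset

/-- Generalized Jacobi function `⁺J_n^{(-α,β)}(x) = (1-x)^α P_n^{(α,β)}(x)` (for `α > -1`). -/
noncomputable def GJFplus (α β : ℝ) (n : ℕ) (x : ℝ) : ℝ :=
  (1 - x) ^ α * jacobiP α β n x

/-! ### Auxiliary lemmas -/

noncomputable def jcoef (a b : ℝ) (n j : ℕ) : ℝ :=
  ((ascPochhammer ℝ j).eval ((n : ℝ) + a + b + 1) / (Nat.factorial j : ℝ)) *
    ((ascPochhammer ℝ (n - j)).eval (a + (j : ℝ) + 1) / (Nat.factorial (n - j) : ℝ))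

lemma jacobiP_eq (a b : ℝ) (n : ℕ) (x : ℝ) :
    jacobiP a b n x = ∑ j ∈ Finset.range (n + 1), jcoef a b n j * ((x - 1) / 2) ^ j := by
  simp [jacobiP, jcoef]

lemma poch_eval (w : ℝ) (m : ℕ) :
    (ascPochhammer ℝ m).eval w = ∏ i ∈ Finset.range m, (w + i) := by
  induction m with
  | zero => simp
  | succ m ih => rw [ascPochhammer_succ_eval, ih, Finset.prod_range_succ]

lemma Gamma_add_nat (z : ℝ) (hz : 0 < z) (m : ℕ) :
    Real.Gamma (z + m) = Real.Gamma z * ∏ i ∈ Finset.range m, (z + i) := by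
  induction m with
  | zero => simp
  | succ m ih =>
    have h : z + (m + 1 : ℕ) = (z + m) + 1 := by push_cast; ring
    rw [h, Real.Gamma_add_one (by positivity), ih, Finset.prod_range_succ]; ring

lemma poch_eval_gamma (w : ℝ) (hw : 0 < w) (m : ℕ) :
    (ascPochhammer ℝ m).eval w = Real.Gamma (w + m) / Real.Gamma w := by
  rw [Gamma_add_nat w hw m, poch_eval, mul_div_cancel_left₀]
  exact (Real.Gamma_pos_of_pos hw).ne'

lemma prod_descending (z : ℝ) (hz : 0 < z) (k : ℕ) (w : ℝ) (hw : w = z + k - 1) :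
    ∏ i ∈ Finset.range k, (w - i) = Real.Gamma (z + k) / Real.Gamma z := by
  rw [Gamma_add_nat z hz k, mul_div_cancel_left₀ _ (Real.Gamma_pos_of_pos hz).ne',
    ← Finset.prod_range_reflect]
  refine Finset.prod_congr rfl fun i hi => ?_
  have hik : i < k := Finset.mem_range.mp hi
  rw [Nat.cast_sub (by omega : i ≤ k - 1), Nat.cast_sub (by omega : 1 ≤ k)]
  push_cast
  rw [hw]
  ring

lemma betaReal_aux (u v : ℝ) (t : ℝ) (ht : t ∈ Set.Icc (0:ℝ) 1) :
    ((t:ℂ) ^ ((u:ℂ) - 1) * (1 - (t:ℂ)) ^ ((v:ℂ) - 1)) =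
      ((t ^ (u-1) * (1-t) ^ (v-1) : ℝ) : ℂ) := by
  rw [Complex.ofReal_mul, Complex.ofReal_cpow ht.1, Complex.ofReal_cpow (by linarith [ht.2])]
  push_cast
  ring_nf

lemma betaReal_integrable {u v : ℝ} (hu : 0 < u) (hv : 0 < v) :
    IntervalIntegrable (fun t => t ^ (u-1) * (1-t) ^ (v-1)) volume 0 1 := by
  have h := Complex.betaIntegral_convergent (u := u) (v := v) (by simpa) (by simpa)
  constructor
  · refine MeasureTheory.IntegrableOn.congr_fun h.1.re (fun t ht => ?_) measurableSet_Ioc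
    rw [betaReal_aux u v t (Set.Ioc_subset_Icc_self ht)]; simp
  · rw [Set.Ioc_eq_empty (by norm_num)]
    exact integrableOn_empty

lemma betaReal {u v : ℝ} (hu : 0 < u) (hv : 0 < v) :
    ∫ t in (0:ℝ)..1, t ^ (u-1) * (1-t) ^ (v-1)
      = Real.Gamma u * Real.Gamma v / Real.Gamma (u+v) := by
  have hB : Complex.betaIntegral u v =
      ((∫ t in (0:ℝ)..1, t ^ (u-1) * (1-t) ^ (v-1) : ℝ) : ℂ) := by
    rw [Complex.betaIntegral, ← intervalIntegral.integral_ofReal]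
    refine intervalIntegral.integral_congr fun t ht => ?_
    rw [Set.uIcc_of_le (by norm_num)] at ht
    exact betaReal_aux u v t ht
  have hG := Complex.Gamma_mul_Gamma_eq_betaIntegral
    (s := u) (t := v) (by simpa) (by simpa)
  rw [hB, ← Complex.ofReal_add, Complex.Gamma_ofReal, Complex.Gamma_ofReal,
    Complex.Gamma_ofReal, ← Complex.ofReal_mul, ← Complex.ofReal_mul] at hG
  have h2 := Complex.ofReal_injective hG
  have hGuv : Real.Gamma (u + v) ≠ 0 := (Real.Gamma_pos_of_pos (by positivity)).ne'
  field_simp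
  linarith [h2]

lemma iter_sum_rpow (N : ℕ) (d μ : ℕ → ℝ) (m : ℕ) :
    ∀ x : ℝ, x < 1 →
      iteratedDeriv m (fun x => ∑ j ∈ Finset.range N, d j * (1-x) ^ (μ j)) x
        = ∑ j ∈ Finset.range N,
            d j * ((-1:ℝ)^m * (∏ i ∈ Finset.range m, (μ j - i)) * (1-x) ^ (μ j - m)) := by
  induction m with
  | zero => intro x hx; simp
  | succ m ih =>
    intro x hx
    have hev : iteratedDeriv m (fun x => ∑ j ∈ Finset.range N, d j * (1-x) ^ (μ j)) =ᶠ[nhds x]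
        (fun y => ∑ j ∈ Finset.range N,
          d j * ((-1:ℝ)^m * (∏ i ∈ Finset.range m, (μ j - i)) * (1-y) ^ (μ j - m))) :=
      Filter.eventually_of_mem (Iio_mem_nhds hx) (fun y hy => ih y hy)
    rw [iteratedDeriv_succ, hev.deriv_eq]
    have hne : (1:ℝ) - x ≠ 0 := (sub_pos.mpr hx).ne'
    have hd : HasDerivAt (fun y => ∑ j ∈ Finset.range N,
        d j * ((-1:ℝ)^m * (∏ i ∈ Finset.range m, (μ j - i)) * (1-y) ^ (μ j - m)))
        (∑ j ∈ Finset.range N,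
          (d j * ((-1:ℝ)^m * (∏ i ∈ Finset.range m, (μ j - i)))) *
            (-1 * (μ j - m) * (1-x) ^ (μ j - m - 1))) x := by
      refine HasDerivAt.fun_sum (A := fun j y => d j * ((-1:ℝ)^m * (∏ i ∈ Finset.range m, (μ j - i)) * (1-y) ^ (μ j - m))) fun j _ => ?_
      have h1 : HasDerivAt (fun y : ℝ => 1 - y) (-1) x := (hasDerivAt_id x).const_sub 1
      have h2 := h1.rpow_const (p := μ j - m) (Or.inl hne)
      have h3 := h2.const_mul (d j * ((-1:ℝ)^m * (∏ i ∈ Finset.range m, (μ j - i))))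
      convert h3 using 2 with y
      case e'_8 => ring
      case e'_4 => rfl
    rw [hd.deriv]
    refine Finset.sum_congr rfl fun j _ => ?_
    rw [Finset.prod_range_succ]
    push_cast
    rw [show μ j - ((m:ℝ)+1) = μ j - ↑m - 1 from by ring]
    ring

lemma Iplus_eval (ρ α β : ℝ) (hρ : 0 < ρ) (hα : -1 < α) (n : ℕ) (x : ℝ) (hx : x < 1) :
    Iplus ρ (fun y => (1 - y) ^ α * jacobiP α β n y) x
      = ∑ j ∈ Finset.range (n+1),
          (jcoef α β n j * (-1/2:ℝ)^j * (Real.Gamma (α+j+1) / Real.Gamma (α+j+ρ+1)))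
          * (1-x) ^ (α+j+ρ) := by
  have hxp : (0:ℝ) < 1 - x := by linarith
  have hsub := intervalIntegral.integral_comp_mul_add
    (a := (0:ℝ)) (b := 1)
    (f := fun y => (y - x) ^ (ρ - 1) * ((1 - y) ^ α * jacobiP α β n y))
    (c := 1 - x) hxp.ne' x
  simp only [mul_zero, zero_add, mul_one, sub_add_cancel, smul_eq_mul] at hsub
  have hcongr : ∫ t in (0:ℝ)..1,
      ((1-x)*t + x - x) ^ (ρ - 1) * ((1 - ((1-x)*t + x)) ^ α * jacobiP α β n ((1-x)*t + x))
      = ∫ t in (0:ℝ)..1, ∑ j ∈ Finset.range (n+1),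
          (jcoef α β n j * (-1/2:ℝ)^j * (1-x) ^ (ρ-1+α+j)) * (t ^ (ρ-1) * (1-t) ^ (α+j)) := by
    refine intervalIntegral.integral_congr_ae ?_
    have h1 : ∀ᵐ t : ℝ, t ≠ (1:ℝ) :=
      compl_mem_ae_iff.mpr (measure_singleton 1)
    filter_upwards [h1] with t ht1 ht
    rw [Set.uIoc_of_le (by norm_num : (0:ℝ) ≤ 1)] at ht
    have htp : 0 < t := ht.1
    have h1t : 0 < 1 - t := lt_of_le_of_ne (by linarith [ht.2]) (sub_ne_zero.mpr (Ne.symm ht1)).symm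
    rw [jacobiP_eq, Finset.mul_sum, Finset.mul_sum]
    refine Finset.sum_congr rfl fun j _ => ?_
    rw [show (1-x)*t + x - x = (1-x)*t from by ring,
        show 1 - ((1-x)*t + x) = (1-x)*(1-t) from by ring,
        show ((1-x)*t + x - 1)/2 = (-1/2)*((1-x)*(1-t)) from by ring,
        Real.mul_rpow hxp.le htp.le, Real.mul_rpow hxp.le h1t.le,
        mul_pow, mul_pow,
        show ρ-1+α+(j:ℝ) = (ρ-1+α)+(j:ℝ) from rfl,
        Real.rpow_add hxp (ρ-1+α) (j:ℝ), Real.rpow_add hxp (ρ-1) α,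
        Real.rpow_add h1t α (j:ℝ)]
    simp only [Real.rpow_natCast]
    ring
  have hint : ∀ j ∈ Finset.range (n+1), IntervalIntegrable
      (fun t => (jcoef α β n j * (-1/2:ℝ)^j * (1-x) ^ (ρ-1+α+j)) * (t ^ (ρ-1) * (1-t) ^ (α+j)))
      volume 0 1 := by
    intro j _
    have hj : (0:ℝ) < α + j + 1 := by
      have : (0:ℝ) ≤ (j:ℝ) := Nat.cast_nonneg j
      linarith
    have h := (betaReal_integrable (u := ρ) (v := α+j+1) hρ hj).const_mul
      (jcoef α β n j * (-1/2:ℝ)^j * (1-x) ^ (ρ-1+α+j))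
    rw [show α+(j:ℝ)+1-1 = α+(j:ℝ) from by ring] at h
    exact h
  rw [intervalIntegral.integral_finset_sum hint] at hcongr
  have hval : ∀ j : ℕ, (∫ t in (0:ℝ)..1, (jcoef α β n j * (-1/2:ℝ)^j * (1-x) ^ (ρ-1+α+j)) *
      (t ^ (ρ-1) * (1-t) ^ (α+j)))
      = (jcoef α β n j * (-1/2:ℝ)^j * (1-x) ^ (ρ-1+α+j)) *
          (Real.Gamma ρ * Real.Gamma (α+j+1) / Real.Gamma (α+j+ρ+1)) := by
    intro j
    rw [intervalIntegral.integral_const_mul]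
    have hj : (0:ℝ) < α + j + 1 := by
      have : (0:ℝ) ≤ (j:ℝ) := Nat.cast_nonneg j
      linarith
    have h := betaReal (u := ρ) (v := α+j+1) hρ hj
    rw [show α+(j:ℝ)+1-1 = α+(j:ℝ) from by ring,
        show ρ+(α+(j:ℝ)+1) = α+(j:ℝ)+ρ+1 from by ring] at h
    rw [h]
  simp only [hval] at hcongr
  have hΓρ : Real.Gamma ρ ≠ 0 := (Real.Gamma_pos_of_pos hρ).ne'
  have hiq : ∫ y in x..1, (y - x) ^ (ρ - 1) * ((1 - y) ^ α * jacobiP α β n y)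
      = (1-x) * ∑ j ∈ Finset.range (n+1), (jcoef α β n j * (-1/2:ℝ)^j * (1-x) ^ (ρ-1+α+j)) *
          (Real.Gamma ρ * Real.Gamma (α+j+1) / Real.Gamma (α+j+ρ+1)) := by
    rw [← hcongr, hsub]
    field_simp
  rw [Iplus, hiq, Finset.mul_sum, Finset.mul_sum]
  refine Finset.sum_congr rfl fun j _ => ?_
  have hj : (0:ℝ) ≤ (j:ℝ) := Nat.cast_nonneg j
  have hΓ2 : Real.Gamma (α+j+ρ+1) ≠ 0 := (Real.Gamma_pos_of_pos (by linarith)).ne'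
  have hpow : (1-x) * (1-x)^(ρ-1+α+(j:ℝ)) = (1-x)^(α+(j:ℝ)+ρ) := by
    nth_rewrite 1 [← Real.rpow_one (1-x)]
    rw [← Real.rpow_add hxp]
    congr 1
    ring
  rw [← hpow]
  field_simp

/-- Theorem 3.1, right fractional derivative of GJFs. -/
theorem stmt8 (s : ℝ) (hs : 0 < s) (k : ℕ) (hk1 : (k : ℝ) - 1 ≤ s) (hk2 : s < k)
    (α β : ℝ) (hα : s - 1 < α) (n : ℕ) :
    ∀ x ∈ Set.Ioo (-1 : ℝ) 1,
      Dplus s k (GJFplus α β n) x =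
        Real.Gamma ((n : ℝ) + α + 1) / Real.Gamma ((n : ℝ) + α - s + 1) *
          GJFplus (α - s) (β + s) n x ∧
      Dplus s k (fun y => (1 - y) ^ α * jacobiP α β n y) x =
        Real.Gamma ((n : ℝ) + α + 1) / Real.Gamma ((n : ℝ) + α - s + 1) *
          ((1 - x) ^ (α - s) * jacobiP (α - s) (β + s) n x) := by
  have hmain : ∀ x ∈ Set.Ioo (-1 : ℝ) 1,
      Dplus s k (fun y => (1 - y) ^ α * jacobiP α β n y) x =
        Real.Gamma ((n : ℝ) + α + 1) / Real.Gamma ((n : ℝ) + α - s + 1) *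
          ((1 - x) ^ (α - s) * jacobiP (α - s) (β + s) n x) := by
    intro x hx
    have hx1 : x < 1 := hx.2
    have hxp : (0:ℝ) < 1 - x := by linarith
    set ρ : ℝ := (k:ℝ) - s with hρdef
    have hρ : 0 < ρ := by simp only [hρdef]; linarith
    have hα' : -1 < α := by linarith
    -- the functions agree near x
    have hev : Iplus ρ (fun y => (1 - y) ^ α * jacobiP α β n y) =ᶠ[nhds x]
        (fun y => ∑ j ∈ Finset.range (n+1),
          (jcoef α β n j * (-1/2:ℝ)^j * (Real.Gamma (α+j+1) / Real.Gamma (α+j+ρ+1)))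
          * (1-y) ^ (α+(j:ℝ)+ρ)) :=
      Filter.eventually_of_mem (Iio_mem_nhds hx1)
        (fun y hy => Iplus_eval ρ α β hρ hα' n y hy)
    have hiter := iter_sum_rpow (n+1)
      (fun j => jcoef α β n j * (-1/2:ℝ)^j * (Real.Gamma (α+j+1) / Real.Gamma (α+j+ρ+1)))
      (fun j => α+(j:ℝ)+ρ) k x hx1
    rw [Dplus, ← hρdef, hev.iteratedDeriv_eq k, hiter, Finset.mul_sum]
    rw [jacobiP_eq, Finset.mul_sum, Finset.mul_sum]
    refine Finset.sum_congr rfl fun j hj => ?_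
    have hjn : j ≤ n := by
      have := Finset.mem_range.mp hj; omega
    have hjc : (0:ℝ) ≤ (j:ℝ) := Nat.cast_nonneg j
    -- positivity facts
    have hz1 : (0:ℝ) < α + j + 1 := by linarith
    have hz2 : (0:ℝ) < α + j - s + 1 := by linarith
    have hz3 : (0:ℝ) < α + j + ρ + 1 := by simp only [hρdef]; linarith
    have hz4 : (0:ℝ) < (n:ℝ) + α - s + 1 := by
      have : (j:ℝ) ≤ (n:ℝ) := Nat.cast_le.mpr hjn
      linarith
    -- the descending product
    have hprod : ∏ i ∈ Finset.range k, ((α+(j:ℝ)+ρ) - i)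
        = Real.Gamma (α+j+ρ+1) / Real.Gamma (α+j-s+1) := by
      have h := prod_descending (α+(j:ℝ)-s+1) hz2 k (α+(j:ℝ)+ρ)
        (by simp only [hρdef]; ring)
      rw [h]
      congr 1
      simp only [hρdef]; ring
    -- Pochhammer-Gamma conversions
    have hca : (n:ℝ) - (j:ℝ) = ((n - j : ℕ) : ℝ) := by
      rw [Nat.cast_sub hjn]
    have hE1 : (ascPochhammer ℝ (n - j)).eval (α + (j:ℝ) + 1)
        = Real.Gamma ((n:ℝ)+α+1) / Real.Gamma (α+(j:ℝ)+1) := by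
      rw [poch_eval_gamma _ hz1]
      congr 2
      rw [← hca]; ring
    have hE2 : (ascPochhammer ℝ (n - j)).eval ((α - s) + (j:ℝ) + 1)
        = Real.Gamma ((n:ℝ)+α-s+1) / Real.Gamma (α+(j:ℝ)-s+1) := by
      have h := poch_eval_gamma ((α-s)+(j:ℝ)+1) (by linarith) (n-j)
      rw [h]
      congr 2
      · rw [← hca]; ring
      · ring
    -- simplify both sides
    rw [hprod]
    rw [jcoef, jcoef, hE1, hE2,
        show (n:ℝ) + (α - s) + (β + s) + 1 = (n:ℝ) + α + β + 1 from by ring]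
    have hexp : (1-x) ^ (α+(j:ℝ)+ρ-(k:ℝ)) = (1-x)^(α-s) * (1-x)^j := by
      rw [show α+(j:ℝ)+ρ-(k:ℝ) = (α-s)+(j:ℝ) from by simp only [hρdef]; ring,
          Real.rpow_add hxp, Real.rpow_natCast]
    rw [hexp, show (x-1)/2 = (-1/2)*(1-x) from by ring, mul_pow]
    have hne1 : Real.Gamma (α+(j:ℝ)+1) ≠ 0 := (Real.Gamma_pos_of_pos hz1).ne'
    have hne2 : Real.Gamma (α+(j:ℝ)-s+1) ≠ 0 := (Real.Gamma_pos_of_pos hz2).ne'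
    have hne3 : Real.Gamma (α+(j:ℝ)+ρ+1) ≠ 0 := (Real.Gamma_pos_of_pos hz3).ne'
    have hne4 : Real.Gamma ((n:ℝ)+α-s+1) ≠ 0 := (Real.Gamma_pos_of_pos hz4).ne'
    have hf1 : (Nat.factorial j : ℝ) ≠ 0 := Nat.cast_ne_zero.mpr (Nat.factorial_ne_zero j)
    have hf2 : (Nat.factorial (n-j) : ℝ) ≠ 0 := Nat.cast_ne_zero.mpr (Nat.factorial_ne_zero _)
    have hm1 : (-1:ℝ)^k * (-1:ℝ)^k = 1 := by
      rw [← mul_pow]; norm_num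
    field_simp
    ring_nf
    rw [show ((-1:ℝ))^(k*2) = 1 from by rw [mul_comm k 2, pow_mul]; norm_num]
    ring_nf
  intro x hx
  exact ⟨hmain x hx, hmain x hx⟩
end

section
/- Let s > 0, and let k ∈ ℕ be the integer with s ∈ [k−1, k). Let α ∈ ℝ, β > s−1, and n ∈ ℕ. Then for every x ∈ (−1, 1), D_−^s[ (1+·)^β P_n^{(α,β)} ](x) = [Γ(n+β+1)/Γ(n+β−s+1)] · (1+x)^{β−s} · P_n^{(α+s, β−s)}(x). Equivalently, in terms of the generalized Jacobi functions, D_−^s[^−J_n^{(α,−β)}] = [Γ(n+β+1)/Γ(n+β−s+1)] · ^−J_n^{(α+s, −β+s)} on (−1,1). -/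
open MeasureTheory Filter Finset

/-- Generalized Jacobi function `⁻J_n^{(α,-β)}(x) = (1+x)^β P_n^{(α,β)}(x)` (for `β > -1`). -/
noncomputable def GJFminus (α β : ℝ) (n : ℕ) (x : ℝ) : ℝ :=
  (1 + x) ^ β * jacobiP α β n x


section Aux
open Polynomial

noncomputable def aP (x : ℝ) (j : ℕ) : ℝ := (ascPochhammer ℝ j).eval x
noncomputable def dP (x : ℝ) (j : ℕ) : ℝ := (descPochhammer ℝ j).eval x

lemma dP_smeval (k : ℕ) (x : ℝ) : (descPochhammer ℤ k).smeval x = dP x k := by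
  rw [← Polynomial.aeval_eq_smeval, aeval_def, ← eval_map, descPochhammer_map, dP]

lemma dP_vandermonde (r : ℕ) (x y : ℝ) :
    dP (x + y) r = ∑ i ∈ range (r + 1), (r.choose i : ℝ) * dP x i * dP y (r - i) := by
  have h := Ring.descPochhammer_smeval_add (R := ℝ) (r := x) (s := y) r (Commute.all x y)
  rw [dP_smeval] at h
  rw [h, Finset.Nat.sum_antidiagonal_eq_sum_range_succ
    (f := fun i j => (r.choose i : ℝ) * ((descPochhammer ℤ i).smeval x * (descPochhammer ℤ j).smeval y))]
  exact Finset.sum_congr rfl fun i _ => by rw [dP_smeval, dP_smeval]; ring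

lemma dP_neg (x : ℝ) (k : ℕ) : dP (-x) k = (-1) ^ k * aP x k := by
  have h := ascPochhammer_eval_neg_eq_descPochhammer ℝ (-x) k
  rw [neg_neg] at h
  have h2 : ((-1 : ℝ) ^ k) * ((-1 : ℝ) ^ k) = 1 := by
    rw [← pow_add, Even.neg_one_pow ⟨k, by ring⟩]
  rw [aP, h, dP, ← mul_assoc, h2, one_mul]

lemma aP_eq_dP (x : ℝ) (k : ℕ) : aP x k = dP (x + k - 1) k := by
  rw [dP, descPochhammer_eval_eq_ascPochhammer, aP]
  ring_nf

lemma aP_add (x : ℝ) (m i : ℕ) : aP x (m + i) = aP x m * aP (x + m) i := by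
  have h := congrArg (Polynomial.eval x) (ascPochhammer_mul (S := ℝ) m i)
  simp only [eval_mul, eval_comp, eval_add, eval_X, eval_natCast] at h
  rw [aP, aP, aP, ← h]

lemma aP_succ (x : ℝ) (k : ℕ) : aP x (k + 1) = aP x k * (x + k) :=
  ascPochhammer_succ_eval k x

lemma dP_succ (x : ℝ) (k : ℕ) : dP x (k + 1) = dP x k * (x - k) :=
  descPochhammer_succ_eval k x

lemma aP_pos {x : ℝ} (hx : 0 < x) (k : ℕ) : 0 < aP x k := ascPochhammer_pos k x hx

lemma Gamma_aP {z : ℝ} (hz : 0 < z) (k : ℕ) :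
    Real.Gamma (z + k) = Real.Gamma z * aP z k := by
  induction k with
  | zero => simp [aP]
  | succ k ih =>
    have h1 : z + (k + 1 : ℕ) = (z + k) + 1 := by push_cast; ring
    rw [h1, Real.Gamma_add_one (by positivity), ih, aP_succ]; ring

lemma keyIdentity (a b : ℝ) (n m : ℕ) (hm : m ≤ n) :
    ∑ j ∈ range (n + 1), aP ((n : ℝ) + a + b + 1) j / (Nat.factorial j : ℝ) *
        (aP (a + j + 1) (n - j) / (Nat.factorial (n - j) : ℝ)) *
        ((j.choose m : ℝ) * (-1 : ℝ) ^ (j - m))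
    = (-1 : ℝ) ^ (n - m) * (aP ((n : ℝ) + a + b + 1) m / (Nat.factorial m : ℝ)) *
        (aP (b + m + 1) (n - m) / (Nat.factorial (n - m) : ℝ)) := by
  set c : ℝ := (n : ℝ) + a + b + 1 with hc
  set r : ℕ := n - m with hr
  have hrc : ((r : ℕ) : ℝ) = (n : ℝ) - m := by rw [hr, Nat.cast_sub hm]
  have hsub : Finset.Ico m (n + 1) ⊆ Finset.range (n + 1) := by
    intro j hj; rw [Finset.mem_Ico] at hj; rw [Finset.mem_range]; omega
  rw [← Finset.sum_subset hsub (by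
    intro j _ hj
    rw [Finset.mem_Ico, not_and_or, not_le] at hj
    have hjm : j < m := by rcases hj with h | h; exact h; · exfalso; rw [Finset.mem_range] at *; omega
    rw [Nat.choose_eq_zero_of_lt hjm]
    simp)]
  rw [Finset.sum_Ico_eq_sum_range]
  have hn1m : n + 1 - m = r + 1 := by omega
  rw [hn1m]
  have hterm : ∀ i ∈ Finset.range (r + 1),
      aP c (m + i) / (Nat.factorial (m + i) : ℝ) *
        (aP (a + (m + i : ℕ) + 1) (n - (m + i)) / (Nat.factorial (n - (m + i)) : ℝ)) *
        (((m + i).choose m : ℝ) * (-1 : ℝ) ^ (m + i - m))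
      = (aP c m / (Nat.factorial m : ℝ)) * (1 / (Nat.factorial r : ℝ)) *
          ((r.choose i : ℝ) * dP (-(c + m)) i * dP (a + m + r) (r - i)) := by
    intro i hi
    rw [Finset.mem_range] at hi
    have hir : i ≤ r := by omega
    have h1 : m + i - m = i := by omega
    have h2 : n - (m + i) = r - i := by omega
    have h3 : aP (a + (m + i : ℕ) + 1) (r - i) = dP (a + m + r) (r - i) := by
      rw [aP_eq_dP]
      congr 1
      push_cast [Nat.cast_sub hir]
      ring
    have h4 : dP (-(c + m)) i = (-1 : ℝ) ^ i * aP (c + m) i := dP_neg _ _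
    have hfac1 : ((Nat.factorial (m + i) : ℝ)) =
        ((m + i).choose m : ℝ) * (Nat.factorial m : ℝ) * (Nat.factorial i : ℝ) := by
      have h := Nat.add_choose_mul_factorial_mul_factorial i m
      rw [add_comm i m] at h
      have h2 : (m + i).factorial = (m + i).choose m * m.factorial * i.factorial := by
        rw [mul_right_comm]; exact h.symm
      exact_mod_cast h2
    have hfac2 : ((Nat.factorial r : ℝ)) =
        (r.choose i : ℝ) * (Nat.factorial i : ℝ) * (Nat.factorial (r - i) : ℝ) := by
      exact_mod_cast (Nat.choose_mul_factorial_mul_factorial hir).symm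
    have hch : 0 < (m + i).choose m := Nat.choose_pos (by omega)
    have hch2 : 0 < r.choose i := Nat.choose_pos hir
    rw [h1, h2, h3, h4, aP_add, hfac1, hfac2]
    have e1 : (Nat.factorial m : ℝ) ≠ 0 := by positivity
    have e2 : (Nat.factorial i : ℝ) ≠ 0 := by positivity
    have e3 : (Nat.factorial (r - i) : ℝ) ≠ 0 := by positivity
    have e4 : ((m + i).choose m : ℝ) ≠ 0 := by positivity
    have e5 : ((r.choose i) : ℝ) ≠ 0 := by positivity
    field_simp
  rw [Finset.sum_congr rfl hterm, ← Finset.mul_sum]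
  have hvan : ∑ i ∈ Finset.range (r + 1),
      ((r.choose i : ℝ) * dP (-(c + m)) i * dP (a + m + r) (r - i)) = dP (-(b + m + 1)) r := by
    rw [← dP_vandermonde]
    congr 1
    rw [hc, hrc]
    ring
  rw [hvan, dP_neg]
  ring

lemma jacobiP_alt (a b : ℝ) (n : ℕ) (x : ℝ) :
    jacobiP a b n x = ∑ j ∈ Finset.range (n + 1),
      (-1 : ℝ) ^ (n - j) * (aP ((n : ℝ) + a + b + 1) j / (Nat.factorial j : ℝ)) *
      (aP (b + j + 1) (n - j) / (Nat.factorial (n - j) : ℝ)) * ((x + 1) / 2) ^ j := by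
  unfold jacobiP
  have hstep : ∀ j ∈ Finset.range (n + 1),
      ((ascPochhammer ℝ j).eval ((n : ℝ) + a + b + 1) / (Nat.factorial j : ℝ)) *
        ((ascPochhammer ℝ (n - j)).eval (a + (j : ℝ) + 1) / (Nat.factorial (n - j) : ℝ)) *
        ((x - 1) / 2) ^ j
      = ∑ m ∈ Finset.range (n + 1),
          (aP ((n : ℝ) + a + b + 1) j / (Nat.factorial j : ℝ) *
            (aP (a + j + 1) (n - j) / (Nat.factorial (n - j) : ℝ)) *
            ((j.choose m : ℝ) * (-1 : ℝ) ^ (j - m))) * ((x + 1) / 2) ^ m := by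
    intro j hj
    rw [Finset.mem_range] at hj
    have hpow : ((x - 1) / 2 : ℝ) ^ j = ((x + 1) / 2 + (-1)) ^ j := by ring_nf
    rw [hpow, add_pow]
    have hsub2 : Finset.range (j + 1) ⊆ Finset.range (n + 1) := by
      intro t ht; rw [Finset.mem_range] at *; omega
    rw [← Finset.sum_subset hsub2 (by
      intro t _ ht
      rw [Finset.mem_range, not_lt] at ht
      rw [Nat.choose_eq_zero_of_lt (by omega)]
      simp)]
    rw [Finset.mul_sum]
    refine Finset.sum_congr rfl fun t _ => ?_
    simp only [aP]
    ring
  rw [Finset.sum_congr rfl hstep, Finset.sum_comm]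
  refine Finset.sum_congr rfl fun m hm => ?_
  rw [Finset.mem_range] at hm
  rw [← Finset.sum_mul, keyIdentity a b n m (by omega)]

end Aux


section AuxAnalysis

lemma realBeta {p q : ℝ} (hp : 0 < p) (hq : 0 < q) :
    ∫ t in (0:ℝ)..1, t ^ (p - 1) * (1 - t) ^ (q - 1) =
      Real.Gamma p * Real.Gamma q / Real.Gamma (p + q) := by
  have h := Complex.Gamma_mul_Gamma_eq_betaIntegral (s := (p : ℂ)) (t := (q : ℂ))
    (by simpa using hp) (by simpa using hq)
  have hbeta : Complex.betaIntegral p q =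
      ((∫ t in (0:ℝ)..1, t ^ (p - 1) * (1 - t) ^ (q - 1) : ℝ) : ℂ) := by
    rw [Complex.betaIntegral, ← intervalIntegral.integral_ofReal]
    refine intervalIntegral.integral_congr fun t ht => ?_
    rw [Set.uIcc_of_le zero_le_one] at ht
    have h0 : (0:ℝ) ≤ t := ht.1
    have h1 : (0:ℝ) ≤ 1 - t := by linarith [ht.2]
    rw [Complex.ofReal_mul, Complex.ofReal_cpow h0, Complex.ofReal_cpow h1]
    push_cast
    ring
  rw [hbeta, ← Complex.ofReal_add, Complex.Gamma_ofReal, Complex.Gamma_ofReal,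
    Complex.Gamma_ofReal, ← Complex.ofReal_mul, ← Complex.ofReal_mul] at h
  have h2 : Real.Gamma p * Real.Gamma q =
      Real.Gamma (p + q) * ∫ t in (0:ℝ)..1, t ^ (p - 1) * (1 - t) ^ (q - 1) := by
    exact_mod_cast h
  have h3 : Real.Gamma (p + q) ≠ 0 := (Real.Gamma_pos_of_pos (by linarith)).ne'
  field_simp [h3] at h2 ⊢
  linarith [h2]

lemma powIntegrable {ρ μ x : ℝ} (hρ : 0 < ρ) (hμ : -1 < μ) (hx : -1 < x) :
    IntervalIntegrable (fun y => (x - y) ^ (ρ - 1) * (1 + y) ^ μ) volume (-1) x := by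
  set m : ℝ := (x - 1) / 2 with hm
  have hm1 : -1 < m := by rw [hm]; linarith
  have hm2 : m < x := by rw [hm]; linarith
  have hP1 : IntervalIntegrable (fun y => (x - y) ^ (ρ - 1) * (1 + y) ^ μ) volume (-1) m := by
    have hA : IntervalIntegrable (fun y : ℝ => (1 + y) ^ μ) volume (-1) m := by
      have h0 := (intervalIntegral.intervalIntegrable_rpow' (a := 0) (b := m + 1) hμ).comp_add_right 1
      have he : (fun y : ℝ => (y + 1) ^ μ) = fun y : ℝ => (1 + y) ^ μ :=
        funext fun y => by rw [add_comm]
      rw [he] at h0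
      simpa using h0
    have hcont : ContinuousOn (fun y : ℝ => (x - y) ^ (ρ - 1)) (Set.uIcc (-1) m) := by
      refine ContinuousOn.rpow_const ((continuous_const.sub continuous_id).continuousOn) ?_
      intro y hy
      rw [Set.uIcc_of_le hm1.le] at hy
      exact Or.inl (by nlinarith [hy.2])
    exact hA.continuousOn_mul hcont
  have hP2 : IntervalIntegrable (fun y => (x - y) ^ (ρ - 1) * (1 + y) ^ μ) volume m x := by
    have hB : IntervalIntegrable (fun y : ℝ => (x - y) ^ (ρ - 1)) volume m x := by
      have h0 := (intervalIntegral.intervalIntegrable_rpow' (a := 0) (b := x - m)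
        (by linarith : (-1:ℝ) < ρ - 1)).comp_sub_left x
      have : x - 0 = x := by ring
      rw [this] at h0
      have : x - (x - m) = m := by ring
      rw [this] at h0
      exact h0.symm
    have hcont : ContinuousOn (fun y : ℝ => (1 + y) ^ μ) (Set.uIcc m x) := by
      refine ContinuousOn.rpow_const ((continuous_const.add continuous_id).continuousOn) ?_
      intro y hy
      rw [Set.uIcc_of_le hm2.le] at hy
      exact Or.inl (by nlinarith [hy.1])
    exact hB.mul_continuousOn hcont
  exact hP1.trans hP2

lemma powIntegral {ρ μ x : ℝ} (hρ : 0 < ρ) (hμ : -1 < μ) (hx : -1 < x) :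
    ∫ y in (-1:ℝ)..x, (x - y) ^ (ρ - 1) * (1 + y) ^ μ =
      Real.Gamma (μ + 1) * Real.Gamma ρ / Real.Gamma (μ + 1 + ρ) * (1 + x) ^ (ρ + μ) := by
  set c : ℝ := 1 + x with hcc
  have hc : 0 < c := by rw [hcc]; linarith
  have h1 : ∫ y in (-1:ℝ)..x, (x - y) ^ (ρ - 1) * (1 + y) ^ μ =
      ∫ u in (0:ℝ)..c, (c - u) ^ (ρ - 1) * u ^ μ := by
    calc ∫ y in (-1:ℝ)..x, (x - y) ^ (ρ - 1) * (1 + y) ^ μ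
        = ∫ y in (-1:ℝ)..x, (fun u => (c - u) ^ (ρ - 1) * u ^ μ) (y + 1) := by
          refine intervalIntegral.integral_congr fun y _ => ?_
          simp only
          rw [show c - (y + 1) = x - y by rw [hcc]; ring, show (y + 1 : ℝ) = 1 + y by ring]
      _ = ∫ u in (-1 + 1 : ℝ)..(x + 1), (c - u) ^ (ρ - 1) * u ^ μ :=
          intervalIntegral.integral_comp_add_right (fun u => (c - u) ^ (ρ - 1) * u ^ μ) 1
      _ = ∫ u in (0:ℝ)..c, (c - u) ^ (ρ - 1) * u ^ μ := by rw [hcc]; norm_num [add_comm]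
  have h2 : ∫ u in (0:ℝ)..c, (c - u) ^ (ρ - 1) * u ^ μ =
      c • ∫ t in (0:ℝ)..1, (c - t * c) ^ (ρ - 1) * (t * c) ^ μ := by
    rw [intervalIntegral.smul_integral_comp_mul_right (fun u => (c - u) ^ (ρ - 1) * u ^ μ) c]
    norm_num
  have h3 : ∀ t ∈ Set.uIcc (0:ℝ) 1, (c - t * c) ^ (ρ - 1) * (t * c) ^ μ =
      (c ^ (ρ - 1) * c ^ μ) * (t ^ (μ + 1 - 1) * (1 - t) ^ (ρ - 1)) := by
    intro t ht
    rw [Set.uIcc_of_le zero_le_one] at ht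
    have h0 : (0:ℝ) ≤ t := ht.1
    have h1t : (0:ℝ) ≤ 1 - t := by linarith [ht.2]
    rw [add_sub_cancel_right, show c - t * c = c * (1 - t) by ring, show t * c = c * t by ring,
      Real.mul_rpow hc.le h1t, Real.mul_rpow hc.le h0]
    ring
  rw [h1, h2, intervalIntegral.integral_congr h3, intervalIntegral.integral_const_mul,
    realBeta (by linarith : (0:ℝ) < μ + 1) hρ]
  have hcc2 : c * (c ^ (ρ - 1) * c ^ μ) = c ^ (ρ + μ) := by
    have e1 : c * c ^ (ρ - 1) = c ^ ρ := by
      nth_rewrite 1 [← Real.rpow_one c]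
      rw [← Real.rpow_add hc]
      norm_num
    rw [← mul_assoc, e1, ← Real.rpow_add hc]
  rw [smul_eq_mul, ← mul_assoc, hcc2]
  ring


lemma iterDeriv_sum_rpow (N : ℕ) (c p : ℕ → ℝ) (k : ℕ) :
    ∀ x : ℝ, -1 < x →
      iteratedDeriv k (fun z => ∑ j ∈ Finset.range N, c j * (1 + z) ^ (p j)) x =
        ∑ j ∈ Finset.range N, c j * dP (p j) k * (1 + x) ^ (p j - k) := by
  induction k with
  | zero => intro x _; simp [dP]
  | succ k ih =>
    intro x hx
    rw [iteratedDeriv_succ]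
    have hev : iteratedDeriv k (fun z => ∑ j ∈ Finset.range N, c j * (1 + z) ^ (p j)) =ᶠ[nhds x]
        fun z => ∑ j ∈ Finset.range N, c j * dP (p j) k * (1 + z) ^ (p j - k) := by
      filter_upwards [isOpen_Ioi.mem_nhds (show x ∈ Set.Ioi (-1:ℝ) from hx)] with z hz
      exact ih z hz
    rw [hev.deriv_eq]
    have hder : HasDerivAt (fun z => ∑ j ∈ Finset.range N, c j * dP (p j) k * (1 + z) ^ (p j - k))
        (∑ j ∈ Finset.range N, c j * dP (p j) k * ((p j - k) * (1 + x) ^ (p j - k - 1))) x := by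
      refine HasDerivAt.fun_sum fun j _ => ?_
      have h1 : HasDerivAt (fun z : ℝ => 1 + z) 1 x := (hasDerivAt_id x).const_add 1
      have h2 : HasDerivAt (fun t : ℝ => t ^ (p j - k))
          ((p j - k) * (1 + x) ^ (p j - k - 1)) (1 + x) :=
        Real.hasDerivAt_rpow_const (Or.inl (by linarith))
      have h3 := h2.comp x h1
      simpa using h3.const_mul (c j * dP (p j) k)
    rw [hder.deriv]
    refine Finset.sum_congr rfl fun j _ => ?_
    rw [dP_succ]
    have he : p j - ((k:ℕ) + 1 : ℕ) = p j - k - 1 := by push_cast; ring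
    rw [he]
    ring

end AuxAnalysis

/-- Theorem 3.1, left fractional derivative of GJFs. -/
theorem stmt9 (s : ℝ) (hs : 0 < s) (k : ℕ) (hk1 : (k : ℝ) - 1 ≤ s) (hk2 : s < k)
    (α β : ℝ) (hβ : s - 1 < β) (n : ℕ) :
    ∀ x ∈ Set.Ioo (-1 : ℝ) 1,
      Dminus s k (GJFminus α β n) x =
        Real.Gamma ((n : ℝ) + β + 1) / Real.Gamma ((n : ℝ) + β - s + 1) *
          GJFminus (α + s) (β - s) n x ∧
      Dminus s k (fun y => (1 + y) ^ β * jacobiP α β n y) x =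
        Real.Gamma ((n : ℝ) + β + 1) / Real.Gamma ((n : ℝ) + β - s + 1) *
          ((1 + x) ^ (β - s) * jacobiP (α + s) (β - s) n x) := by
  intro x hx
  obtain ⟨hx1, hx2⟩ := hx
  have hx' : (0:ℝ) < 1 + x := by linarith
  have hρ : (0:ℝ) < (k:ℝ) - s := by linarith
  have hβ0 : (-1:ℝ) < β := by linarith
  have hβs : (0:ℝ) < β - s + 1 := by linarith
  set ρ : ℝ := (k:ℝ) - s with hρdef
  set c : ℝ := (n:ℝ) + α + β + 1 with hcdef
  set C : ℕ → ℝ := fun j => (-1:ℝ)^(n-j) * (aP c j / (Nat.factorial j : ℝ)) *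
      (aP (β+(j:ℕ)+1) (n-j) / (Nat.factorial (n-j) : ℝ)) * (1/2:ℝ)^j with hCdef
  set p : ℕ → ℝ := fun j => ρ + (β + (j:ℕ)) with hpdef
  set c' : ℕ → ℝ := fun j => C j * (Real.Gamma (β+(j:ℕ)+1) / Real.Gamma (β+(j:ℕ)+1+ρ)) with hc'def
  have hΓρ : Real.Gamma ρ ≠ 0 := (Real.Gamma_pos_of_pos hρ).ne'
  -- pointwise expansion of the GJF
  have hGJF : ∀ z : ℝ, -1 < z →
      GJFminus α β n z = ∑ j ∈ Finset.range (n+1), C j * (1+z) ^ (β + (j:ℕ)) := by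
    intro z hz
    have hz' : (0:ℝ) < 1 + z := by linarith
    rw [GJFminus, jacobiP_alt, Finset.mul_sum]
    refine Finset.sum_congr rfl fun j _ => ?_
    rw [Real.rpow_add hz', Real.rpow_natCast,
      show ((z+1)/2 : ℝ) = (1+z) * (1/2) by ring, mul_pow, hCdef, hcdef]
    simp only
    ring
  -- value of the fractional integral
  have hIm : ∀ z : ℝ, -1 < z →
      Iminus ρ (GJFminus α β n) z = ∑ j ∈ Finset.range (n+1), c' j * (1+z) ^ (p j) := by
    intro z hz
    have hμ : ∀ j : ℕ, (-1:ℝ) < β + (j:ℕ) := fun j => by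
      have : (0:ℝ) ≤ (j:ℕ) := Nat.cast_nonneg j
      linarith
    have hint : ∀ j ∈ Finset.range (n+1),
        IntervalIntegrable (fun y => C j * ((z-y)^(ρ-1) * (1+y)^(β+(j:ℕ)))) MeasureTheory.volume (-1) z :=
      fun j _ => (powIntegrable hρ (hμ j) hz).const_mul (C j)
    rw [Iminus]
    have hcong : ∫ y in (-1:ℝ)..z, (z-y)^(ρ-1) * GJFminus α β n y
        = ∑ j ∈ Finset.range (n+1), C j * ∫ y in (-1:ℝ)..z, (z-y)^(ρ-1) * (1+y)^(β+(j:ℕ)) := by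
      rw [show (∫ y in (-1:ℝ)..z, (z-y)^(ρ-1) * GJFminus α β n y)
          = ∫ y in (-1:ℝ)..z, ∑ j ∈ Finset.range (n+1), C j * ((z-y)^(ρ-1) * (1+y)^(β+(j:ℕ)))
          from intervalIntegral.integral_congr_ae (Filter.Eventually.of_forall fun y hy => ?_),
        intervalIntegral.integral_finset_sum hint]
      · exact Finset.sum_congr rfl fun j _ => intervalIntegral.integral_const_mul _ _
      · rw [Set.uIoc_of_le hz.le] at hy
        rw [hGJF y hy.1, Finset.mul_sum]
        exact Finset.sum_congr rfl fun j _ => by ring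
    rw [hcong, Finset.mul_sum]
    refine Finset.sum_congr rfl fun j _ => ?_
    simp only [hc'def, hpdef]
    rw [powIntegral hρ (hμ j) hz]
    have hΓ1 : Real.Gamma (β+(j:ℕ)+1+ρ) ≠ 0 := by
      refine (Real.Gamma_pos_of_pos ?_).ne'
      have : (0:ℝ) ≤ (j:ℕ) := Nat.cast_nonneg j
      linarith
    field_simp [hΓρ, hΓ1]
  -- the main computation
  have key : Dminus s k (GJFminus α β n) x =
      Real.Gamma ((n:ℝ) + β + 1) / Real.Gamma ((n:ℝ) + β - s + 1) *
        ((1 + x) ^ (β - s) * jacobiP (α + s) (β - s) n x) := by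
    have hev : Iminus ρ (GJFminus α β n) =ᶠ[nhds x]
        fun z => ∑ j ∈ Finset.range (n+1), c' j * (1+z) ^ (p j) := by
      filter_upwards [isOpen_Ioi.mem_nhds (show x ∈ Set.Ioi (-1:ℝ) from hx1)] with z hz
      exact hIm z hz
    have hD : Dminus s k (GJFminus α β n) x =
        ∑ j ∈ Finset.range (n+1), c' j * dP (p j) k * (1+x) ^ (p j - (k:ℕ)) := by
      rw [Dminus, show ((k:ℝ) - s) = ρ from rfl, Filter.EventuallyEq.iteratedDeriv_eq k hev]
      exact iterDeriv_sum_rpow (n+1) c' p k x hx1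
    rw [hD]
    have hsum : ∀ j ∈ Finset.range (n+1),
        c' j * dP (p j) k * (1+x) ^ (p j - (k:ℕ)) =
        Real.Gamma ((n:ℝ) + β + 1) / Real.Gamma ((n:ℝ) + β - s + 1) *
          ((1 + x) ^ (β - s) *
            ((-1:ℝ)^(n-j) * (aP ((n:ℝ)+(α+s)+(β-s)+1) j / (Nat.factorial j : ℝ)) *
              (aP ((β-s)+(j:ℕ)+1) (n-j) / (Nat.factorial (n-j) : ℝ)) * ((x+1)/2)^j)) := by
      intro j hj
      rw [Finset.mem_range] at hj
      have hjn : j ≤ n := by omega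
      have hcast : ((n-j:ℕ):ℝ) = (n:ℝ) - j := Nat.cast_sub hjn
      have hz1 : (0:ℝ) < β + (j:ℕ) + 1 := by
        have : (0:ℝ) ≤ (j:ℕ) := Nat.cast_nonneg j; linarith
      have hz2 : (0:ℝ) < β - s + (j:ℕ) + 1 := by
        have : (0:ℝ) ≤ (j:ℕ) := Nat.cast_nonneg j; linarith
      have f1 : dP (p j) k = aP (β - s + (j:ℕ) + 1) k := by
        rw [aP_eq_dP]
        congr 1
        rw [hpdef]
        simp only
        rw [hρdef]
        ring
      have f3 : Real.Gamma (β+(j:ℕ)+1+ρ) = Real.Gamma (β - s + (j:ℕ) + 1) * aP (β - s + (j:ℕ) + 1) k := by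
        rw [← Gamma_aP hz2 k]
        congr 1
        rw [hρdef]
        ring
      have f4 : Real.Gamma (β+(j:ℕ)+1) * aP (β+(j:ℕ)+1) (n-j) = Real.Gamma ((n:ℝ)+β+1) := by
        rw [← Gamma_aP hz1 (n-j)]
        congr 1
        rw [hcast]
        ring
      have f5 : Real.Gamma ((β-s)+(j:ℕ)+1) * aP ((β-s)+(j:ℕ)+1) (n-j) = Real.Gamma ((n:ℝ)+β-s+1) := by
        rw [← Gamma_aP hz2 (n-j)]
        congr 1
        rw [hcast]
        ring
      have f6 : aP ((n:ℝ)+(α+s)+(β-s)+1) j = aP c j := by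
        rw [hcdef]
        congr 1
        ring
      have fpow : (1+x) ^ (p j - (k:ℕ)) = (1+x)^(β-s) * (1+x)^(j:ℕ) := by
        rw [show p j - ((k:ℕ):ℝ) = (β-s) + ((j:ℕ):ℝ) by rw [hpdef]; simp only; rw [hρdef]; ring,
          Real.rpow_add hx', Real.rpow_natCast]
      have fpow2 : ((x+1)/2 : ℝ)^j = (1+x)^(j:ℕ) * (1/2:ℝ)^j := by
        rw [show ((x+1)/2 : ℝ) = (1+x) * (1/2) by ring, mul_pow]
      have hg1 : (0:ℝ) < Real.Gamma (β+(j:ℕ)+1) := Real.Gamma_pos_of_pos hz1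
      have hg2 : (0:ℝ) < Real.Gamma (β-s+(j:ℕ)+1) := Real.Gamma_pos_of_pos hz2
      have hg3 : (0:ℝ) < Real.Gamma ((n:ℝ)+β-s+1) := by
        refine Real.Gamma_pos_of_pos ?_
        have : (0:ℝ) ≤ (n:ℕ) := Nat.cast_nonneg n
        linarith
      have hap : (0:ℝ) < aP (β - s + (j:ℕ) + 1) k := aP_pos hz2 k
      have hfj : ((Nat.factorial j : ℕ) : ℝ) ≠ 0 := by positivity
      have hfnj : ((Nat.factorial (n-j) : ℕ) : ℝ) ≠ 0 := by positivity
      -- express the two ascPochhammers via Gamma quotients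
      have f4' : aP (β+(j:ℕ)+1) (n-j) = Real.Gamma ((n:ℝ)+β+1) / Real.Gamma (β+(j:ℕ)+1) := by
        rw [← f4]; field_simp
      have f5' : aP ((β-s)+(j:ℕ)+1) (n-j) = Real.Gamma ((n:ℝ)+β-s+1) / Real.Gamma ((β-s)+(j:ℕ)+1) := by
        rw [← f5]; field_simp
      simp only [hc'def, hCdef]
      rw [f1, fpow, f3, f6, fpow2, f4', f5']
      field_simp [hg1.ne', hg2.ne', hg3.ne', hap.ne', hfj, hfnj]
    rw [Finset.sum_congr rfl hsum, ← Finset.mul_sum, ← Finset.mul_sum, jacobiP_alt (α+s) (β-s) n x]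
  exact ⟨key, key⟩
end
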